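/- For unit vectors |ψ₀⟩, |ψ₁⟩ in a finite-dimensional Hilbert space, the normalized superposition |φ⟩ = (|ψ₀⟩+|ψ₁⟩)/‖|ψ₀⟩+|ψ₁⟩‖ satisfies |⟨ψ_b|φ⟩|² = (1 + Re⟨ψ₀|ψ₁⟩)/2 for b ∈ {0,1}. In particular, for the protocol states |ψ₀⟩, |ψ₁⟩ with ⟨ψ₀|ψ₁⟩ = cos²(α/2), this equals (1/2)(1 + cos²(α/2)). -/

import Mathlib

open scoped InnerProductSpace

/-- for unit vectors `ψ₀, ψ₁` with real inner product, the normalized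
superposition `φ = (ψ₀+ψ₁)/‖ψ₀+ψ₁‖` satisfies `|⟨ψ_b|φ⟩|² = (1 + Re⟨ψ₀|ψ₁⟩)/2`;
for the protocol states, where `⟨ψ₀|ψ₁⟩ = cos²(α/2)`, this equals `(1/2)(1+cos²(α/2))`. -/
theorem superposition_overlap {n : Type*} [Fintype n]
    (ψ : Fin 2 → EuclideanSpace ℂ n)
    (hunit : ∀ b, ‖ψ b‖ = 1)
    (hne : ψ 0 + ψ 1 ≠ 0)
    (hreal : (⟪ψ 0, ψ 1⟫_ℂ).im = 0) :
    (∀ b : Fin 2,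
        ‖⟪ψ b, (‖ψ 0 + ψ 1‖⁻¹ : ℝ) • (ψ 0 + ψ 1)⟫_ℂ‖ ^ 2 =
          (1 + (⟪ψ 0, ψ 1⟫_ℂ).re) / 2) ∧
    (∀ α : ℝ, α ∈ Set.Icc 0 Real.pi → ⟪ψ 0, ψ 1⟫_ℂ = (Real.cos (α / 2) : ℂ) ^ 2 →
      ∀ b : Fin 2,
        ‖⟪ψ b, (‖ψ 0 + ψ 1‖⁻¹ : ℝ) • (ψ 0 + ψ 1)⟫_ℂ‖ ^ 2 =
          (1 / 2) * (1 + Real.cos (α / 2) ^ 2)) := by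
  set c : ℝ := (⟪ψ 0, ψ 1⟫_ℂ).re with hc
  have hinner : ⟪ψ 0, ψ 1⟫_ℂ = (c : ℂ) := by
    apply Complex.ext
    · simp only [Complex.ofReal_re, hc]
    · simp only [Complex.ofReal_im]; exact hreal
  have h01 : ⟪ψ 1, ψ 0⟫_ℂ = (c : ℂ) := by
    rw [← inner_conj_symm, hinner]
    simp
  have hself : ∀ b, ⟪ψ b, ψ b⟫_ℂ = 1 := by
    intro b
    rw [inner_self_eq_norm_sq_to_K, hunit b]
    norm_num
  have hnorm : ‖ψ 0 + ψ 1‖ ^ 2 = 2 + 2 * c := by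
    rw [@norm_add_sq ℂ, hunit 0, hunit 1]
    simp only [RCLike.re_to_complex]
    ring
  have hposn : (0:ℝ) < ‖ψ 0 + ψ 1‖ := norm_pos_iff.mpr hne
  have hpos : 0 < 2 + 2 * c := hnorm ▸ (by positivity)
  have hcpos : 0 < 1 + c := by linarith
  have key : ∀ b : Fin 2,
      ‖⟪ψ b, (‖ψ 0 + ψ 1‖⁻¹ : ℝ) • (ψ 0 + ψ 1)⟫_ℂ‖ ^ 2 = (1 + c) / 2 := by
    intro b
    have hsum : ⟪ψ b, ψ 0 + ψ 1⟫_ℂ = ((1 + c : ℝ) : ℂ) := by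
      fin_cases b <;>
        simp [inner_add_right, hself, hinner, h01, hunit] <;> push_cast <;> ring
    rw [RCLike.real_smul_eq_coe_smul (K := ℂ), inner_smul_right, hsum]
    rw [norm_mul]
    simp only [RCLike.norm_ofReal, Complex.norm_real, Real.norm_eq_abs]
    rw [abs_of_pos (inv_pos.mpr hposn), abs_of_pos hcpos,
      mul_pow, inv_pow, hnorm]
    field_simp
  refine ⟨key, ?_⟩
  intro α _ hcos b
  have hceq : c = Real.cos (α / 2) ^ 2 := by
    rw [hinner] at hcos
    exact_mod_cast hcos
  rw [key b, hceq]
  ring
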